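/- Let n ≥ 4 be an even integer such that n + 1 is not a power of a prime. Then gcd(s(0,n), s(1,n), ..., s(n−2,n)) = 1. -/

import Mathlib

/-- The change `s(k,n)` of the Milnor number of an `n`-dimensional complex manifold under
the modification `B_k`:
`s(k,n) = −( (n−k−1)·(2^{k+1}−1) + Σ_{i=0}^{k} (−1)^i·(2^i + (−1)^n·2^{k−i})·C(n−1,i) + n + (−1)^n )`. -/
def milnorChange (k n : ℕ) : ℤ :=
  -(((n : ℤ) - k - 1) * (2 ^ (k + 1) - 1) +
      ∑ i ∈ Finset.range (k + 1),
        (-1) ^ i * (2 ^ i + (-1) ^ n * 2 ^ (k - i)) * ((n - 1).choose i : ℤ) +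
    n + (-1) ^ n)

lemma milnor_one (n : ℕ) (hn : 1 ≤ n) (h : (-1:ℤ)^n = 1) :
    milnorChange 1 n = -((n:ℤ)+1) := by
  obtain ⟨m, rfl⟩ := Nat.exists_eq_add_of_le hn
  unfold milnorChange
  rw [h]
  simp [Finset.sum_range_succ]
  ring

lemma milnor_key (n k : ℕ) (hn : 1 ≤ n) (h : (-1:ℤ)^n = 1) :
    milnorChange (k+2) n - 3 * milnorChange (k+1) n + 2 * milnorChange k n
      = -((2^(k+2)+1) * ((-1)^k * (n.choose (k+2) : ℤ) - 1)) := by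
  obtain ⟨nm, rfl⟩ : ∃ m, n = m + 1 := ⟨n - 1, by omega⟩
  unfold milnorChange
  rw [h]
  rw [Finset.sum_range_succ _ (k+2), Finset.sum_range_succ _ (k+1),
      Finset.sum_range_succ _ (k+1)]
  have e2 : ∑ i ∈ Finset.range (k+1),
        (-1:ℤ) ^ i * (2 ^ i + 1 * 2 ^ (k + 2 - i)) * ((nm+1-1).choose i : ℤ)
      = ∑ i ∈ Finset.range (k+1),
        (3 * ((-1:ℤ) ^ i * (2 ^ i + 1 * 2 ^ (k + 1 - i)) * ((nm+1-1).choose i : ℤ))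
         - 2 * ((-1:ℤ) ^ i * (2 ^ i + 1 * 2 ^ (k - i)) * ((nm+1-1).choose i : ℤ))) := by
    apply Finset.sum_congr rfl
    intro i hi
    have hik : i ≤ k := by simpa [Nat.lt_succ_iff] using hi
    have h2 : k + 2 - i = (k - i) + 2 := by omega
    have h1 : k + 1 - i = (k - i) + 1 := by omega
    rw [h1, h2]; ring
  rw [e2]
  simp only [show k+2-(k+1) = 1 from by omega, show k+2-(k+2) = 0 from by omega,
    show k+1-(k+1) = 0 from by omega]
  have hP : ((nm+1).choose (k+2) : ℤ) = ((nm.choose (k+1) : ℤ) + (nm.choose (k+2) : ℤ)) := by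
    rw [Nat.choose_succ_succ]; push_cast; ring
  simp only [Nat.add_sub_cancel] at *
  rw [hP, Finset.sum_sub_distrib, ← Finset.mul_sum, ← Finset.mul_sum]
  push_cast
  ring

open Nat in
lemma lucas_step_B (p : ℕ) [hp : Fact p.Prime] (a b : ℕ) :
    ((p * a).choose (p * b) : ZMod p) = ((a.choose b : ℕ) : ZMod p) := by
  have h := Choose.choose_modEq_choose_mod_mul_choose_div_nat (p := p) (n := p*a) (k := p*b)
  have hp0 : 0 < p := hp.out.pos
  rw [Nat.mul_mod_right, Nat.mul_mod_right, Nat.mul_div_cancel_left _ hp0,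
    Nat.mul_div_cancel_left _ hp0] at h
  simpa using (ZMod.natCast_eq_natCast_iff _ _ _).mpr h

open Nat in
lemma lucas_step_A (p : ℕ) [hp : Fact p.Prime] (a b : ℕ) (ha : 1 ≤ a) :
    ((p * a - 1).choose (p * b) : ZMod p) = (((a-1).choose b : ℕ) : ZMod p) := by
  have h := Choose.choose_modEq_choose_mod_mul_choose_div_nat (p := p) (n := p*a - 1) (k := p*b)
  have hp0 : 0 < p := hp.out.pos
  have key : p * a - 1 = p * (a - 1) + (p - 1) := by
    cases a with
    | zero => omega
    | succ a' => simp only [Nat.mul_succ, Nat.add_sub_cancel]; omega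
  have hmod : (p * a - 1) % p = p - 1 := by
    rw [key, Nat.mul_add_mod, Nat.mod_eq_of_lt (by omega)]
  have hdiv : (p * a - 1) / p = a - 1 := by
    rw [key, Nat.mul_add_div hp0, Nat.div_eq_of_lt (by omega)]; omega
  rw [hmod, hdiv, Nat.mul_mod_right, Nat.mul_div_cancel_left _ hp0,
    Nat.choose_zero_right, one_mul] at h
  exact (ZMod.natCast_eq_natCast_iff _ _ _).mpr h

lemma lucas_B (p : ℕ) [hp : Fact p.Prime] (r m b : ℕ) :
    ((p^r * m).choose (p^r * b) : ZMod p) = ((m.choose b : ℕ) : ZMod p) := by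
  induction r with
  | zero => simp
  | succ r ih =>
      have e : ∀ x : ℕ, p^(r+1) * x = p * (p^r * x) := by intro x; ring
      rw [e, e, lucas_step_B]
      exact ih

lemma lucas_A (p : ℕ) [hp : Fact p.Prime] (r m b : ℕ) (hm : 1 ≤ m) :
    ((p^r * m - 1).choose (p^r * b) : ZMod p) = (((m-1).choose b : ℕ) : ZMod p) := by
  induction r with
  | zero => simp
  | succ r ih =>
      have e : ∀ x : ℕ, p^(r+1) * x = p * (p^r * x) := by intro x; ring
      have hm' : 1 ≤ p^r * m := Nat.mul_pos (Nat.pow_pos hp.out.pos) hm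
      rw [e, e, lucas_step_A p _ _ hm']
      exact ih


/-- Let `n ≥ 4` be even with `n + 1` not a prime power. Then
`gcd(s(0,n), s(1,n), …, s(n−2,n)) = 1`. -/
theorem gcd_milnorChange_eq_one (n : ℕ) (hn : 4 ≤ n) (heven : Even n)
    (hnp : ¬∃ (p r : ℕ), p.Prime ∧ 1 ≤ r ∧ n + 1 = p ^ r) :
    Finset.gcd (Finset.range (n - 1)) (fun k => milnorChange k n) = 1 := by
  have hneg : (-1:ℤ)^n = 1 := Even.neg_one_pow heven
  have hn1 : 1 ≤ n := by omega
  set g := Finset.gcd (Finset.range (n-1)) (fun k => milnorChange k n) with hg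
  have hnormal : normalize g = g := Finset.normalize_gcd
  suffices h1 : g.natAbs = 1 by
    rcases Int.natAbs_eq_iff.mp h1 with h | h
    · simpa using h
    · rw [← hnormal, h, ← Int.abs_eq_normalize]; simp
  by_contra hne
  obtain ⟨p, pp, hpdvd⟩ := Nat.exists_prime_and_dvd hne
  haveI : Fact p.Prime := ⟨pp⟩
  have hpg : (p:ℤ) ∣ g := Int.dvd_natAbs.mp (Int.natCast_dvd_natCast.mpr hpdvd)
  have hdvdS : ∀ k, k ≤ n - 2 → (p:ℤ) ∣ milnorChange k n := by
    intro k hk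
    exact hpg.trans (Finset.gcd_dvd (by simp only [Finset.mem_range]; omega))
  have hs1 : milnorChange 1 n = -((n:ℤ)+1) := milnor_one n hn1 hneg
  have hpn1 : p ∣ n + 1 := by
    have h2 := hdvdS 1 (by omega)
    rw [hs1, dvd_neg] at h2
    exact_mod_cast h2
  have hodd : ¬ 2 ∣ (n+1) := by obtain ⟨c,hc⟩ := heven; omega
  have hp2 : p ≠ 2 := fun h => hodd (h ▸ hpn1)
  have hp3 : 3 ≤ p := by have := pp.two_le; omega
  have hpodd : Odd p := pp.odd_of_ne_two hp2
  set r := (n+1).factorization p with hr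
  set q := p ^ r with hq
  set m := (n+1) / q with hm
  have hqm : q * m = n + 1 := Nat.ordProj_mul_ordCompl_eq_self (n+1) p
  have hpm : ¬ p ∣ m := Nat.not_dvd_ordCompl pp (by omega)
  have hr1 : 1 ≤ r := (pp.factorization_pos_of_dvd (by omega) hpn1)
  clear_value m q r
  have hm1 : m ≠ 1 := by
    intro h1'
    have hqn : n + 1 = p ^ r := by rw [← hqm, h1', mul_one, hq]
    exact hnp ⟨p, r, pp, hr1, hqn⟩
  have hmodd : ¬ 2 ∣ m := by
    rintro ⟨c, hc⟩
    exact hodd ⟨q*c, by rw [← hqm, hc]; ring⟩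
  have hm0 : m ≠ 0 := by intro h0; rw [h0, mul_zero] at hqm; omega
  have hm2 : m ≠ 2 := by intro h'; exact hmodd ⟨1, by omega⟩
  have hm3 : 3 ≤ m := by omega
  have hq3 : 3 ≤ q := by rw [hq]; exact le_trans hp3 (Nat.le_self_pow (by omega) p)
  have hqodd : Odd q := by rw [hq]; exact hpodd.pow
  obtain ⟨t, ht⟩ : ∃ t, q = 2*t + 3 := by obtain ⟨u,hu⟩ := hqodd; exact ⟨u-1, by omega⟩
  have hq_le : 2*q ≤ n - 2 := by
    have h3 := Nat.mul_le_mul_left q hm3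
    omega
  have hz : ∀ k, k + 2 ≤ n - 2 →
      ((2:ZMod p)^(k+2) + 1) * ((-1)^k * ((n.choose (k+2) : ℕ) : ZMod p) - 1) = 0 := by
    intro k hk
    have hD : (p:ℤ) ∣ ((2^(k+2)+1) * ((-1)^k * (n.choose (k+2) : ℤ) - 1)) := by
      have h1 := hdvdS (k+2) hk
      have h2 := hdvdS (k+1) (by omega)
      have h3 := hdvdS k (by omega)
      have hkey := milnor_key n k hn1 hneg
      have hd : (p:ℤ) ∣ milnorChange (k+2) n - 3*milnorChange (k+1) n + 2*milnorChange k n :=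
        dvd_add (dvd_sub h1 (h2.mul_left 3)) (h3.mul_left 2)
      rw [hkey, dvd_neg] at hd; exact hd
    have hc := (ZMod.intCast_zmod_eq_zero_iff_dvd _ p).mpr hD
    push_cast at hc
    exact hc
  have h2ne : (2 : ZMod p) ≠ 0 := by
    have hnd : ¬ (p ∣ 2) := fun h => by have := Nat.le_of_dvd (by norm_num) h; omega
    have h2 : ((2:ℕ) : ZMod p) ≠ 0 := fun h => hnd ((ZMod.natCast_eq_zero_iff _ _).mp h)
    simpa using h2
  have hferm : (2 : ZMod p)^(2*t+2) = 1 := by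
    obtain ⟨c, hc⟩ : (p - 1) ∣ (2*t + 2) := by
      have hd := Nat.sub_dvd_pow_sub_pow p 1 r
      simp only [one_pow] at hd
      have : p^r - 1 = 2*t+2 := by omega
      rwa [this] at hd
    rw [hc, pow_mul, ZMod.pow_card_sub_one_eq_one h2ne, one_pow]
  -- index q - 1 = 2t+2
  have hzA := hz (2*t) (by omega)
  rw [show (-1:ZMod p)^(2*t) = 1 by rw [pow_mul]; norm_num, hferm, one_mul] at hzA
  rcases mul_eq_zero.mp hzA with h | hA
  · exact h2ne (by linear_combination h)
  have hA' : ((n.choose (2*t+2) : ℕ) : ZMod p) = 1 := by rwa [sub_eq_zero] at hA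
  -- index q = 2t+3
  have hzB := hz (2*t+1) (by omega)
  rw [show (-1:ZMod p)^(2*t+1) = -1 by rw [pow_succ, pow_mul]; norm_num] at hzB
  rcases mul_eq_zero.mp hzB with h | hB
  · -- p = 3 case
    have h2q : (2:ZMod p)^(2*t+3) = 2 := by
      rw [show 2*t+3 = (2*t+2)+1 from by omega, pow_succ, hferm, one_mul]
    rw [h2q] at h
    have h3 : ((3:ℕ) : ZMod p) = 0 := by push_cast; linear_combination h
    have hp3' : p = 3 :=
      (Nat.prime_dvd_prime_iff_eq pp Nat.prime_three).mp
        ((ZMod.natCast_eq_zero_iff _ _).mp h3)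
    have hzC := hz (4*t+4) (by omega)
    have e1 : (-1:ZMod p)^(4*t+4) = 1 := by
      rw [show 4*t+4 = 2*(2*t+2) from by ring, pow_mul, neg_one_sq, one_pow]
    have e2 : (2:ZMod p)^(4*t+4+2) = 1 := by
      have d2 : (2:ZMod p)^2 = 1 := by push_cast at h3; linear_combination h3
      rw [show 4*t+4+2 = 2*(2*t+3) from by ring, pow_mul, d2, one_pow]
    rw [e1, e2, one_mul] at hzC
    rcases mul_eq_zero.mp hzC with h' | h'
    · exact h2ne (by linear_combination h')
    · have hC : ((n.choose (4*t+4+2) : ℕ) : ZMod p) = 1 := by rwa [sub_eq_zero] at h'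
      have en : n = p^r * m - 1 := by rw [← hq]; omega
      have ej : 4*t+4+2 = p^r * 2 := by rw [← hq]; omega
      rw [en, ej, lucas_A p r m 2 (by omega)] at hC
      have h30 : (((m-1).choose 2 : ℕ) : ZMod p) = 0 := by
        apply (ZMod.natCast_eq_zero_iff _ _).mpr
        rw [hp3']
        have h2C : (m-1).choose 2 * 2 = (m-1) * (m-2) := by
          rw [Nat.choose_two_right, show m-1-1 = m-2 from by omega]
          apply Nat.div_mul_cancel
          have he : Even ((m-2) * (m-2+1)) := Nat.even_mul_succ_self (m-2)
          rw [show m-2+1 = m-1 from by omega, mul_comm] at he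
          exact he.two_dvd
        have hmodne : m % 3 ≠ 0 := fun hh => hpm (by rw [hp3']; exact Nat.dvd_of_mod_eq_zero hh)
        have h3d : 3 ∣ (m-1) * (m-2) := by
          rcases (show m % 3 = 1 ∨ m % 3 = 2 from by omega) with hcase | hcase
          · exact Dvd.dvd.mul_right (by omega) _
          · exact Dvd.dvd.mul_left (by omega) _
        rw [← h2C] at h3d
        rcases (Nat.Prime.dvd_mul Nat.prime_three).mp h3d with hdd | hdd
        · exact hdd
        · omega
      rw [h30] at hC
      exact one_ne_zero hC.symm
  · -- generic case
    have hBv : ((n.choose (2*t+3) : ℕ) : ZMod p) = -1 := by linear_combination -hB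
    have hpas : (n+1).choose (2*t+3) = n.choose (2*t+2) + n.choose (2*t+3) := by
      have hcs := Nat.choose_succ_succ n (2*t+2)
      simpa [Nat.succ_eq_add_one, show (2*t+2)+1 = 2*t+3 from by omega] using hcs
    have hP : (((n+1).choose (2*t+3) : ℕ) : ZMod p) = 0 := by
      rw [hpas]
      push_cast
      rw [hA', hBv]
      ring
    have hL : (((n+1).choose (2*t+3) : ℕ) : ZMod p) = ((m : ℕ) : ZMod p) := by
      have en : n + 1 = p^r * m := by rw [← hq]; omega
      have ej : 2*t+3 = p^r * 1 := by rw [mul_one, ← hq]; omega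
      rw [en, ej, lucas_B p r m 1, Nat.choose_one_right]
    rw [hL] at hP
    exact hpm ((ZMod.natCast_eq_zero_iff _ _).mp hP)
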